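/- If Λ₀E + Λ₁R = I and R(δ − δ') ∈ Z^D for δ, δ' ∈ R^D, then the map φ(ξ)(x,k) = ξ(x + E(δ'−δ), k + R(δ'−δ)) is an isomorphism of left A^D_{ħ,q}(F)-modules from S_ħ^δ(Λ₀,E,Λ₁,R) to S_ħ^{δ'}(Λ₀,E,Λ₁,R). -/

import Mathlib

open scoped BigOperators

noncomputable section

abbrev V (D : ℕ) := Fin D → ℝ
abbrev L (D : ℕ) := Fin D → ℤ

def cz {D : ℕ} (n : L D) : V D := fun i => (n i : ℝ)

def Nr (D : ℕ) (x y : Fin D → ℝ) : ℝ :=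
  ∑ m : Fin D, ∑ n : Fin D, if (n : ℕ) < (m : ℕ) then x m * y n else 0

def Nz (D : ℕ) (k l : L D) : ℤ :=
  ∑ m : Fin D, ∑ n : Fin D, if (n : ℕ) < (m : ℕ) then k m * l n else 0

def Sh (D : ℕ) (hb : ℝ) (k : L D) (f : V D → ℂ) : V D → ℂ :=
  fun u => f (fun i => u i + hb * (k i : ℝ))

abbrev Alg (D : ℕ) := (L D) →₀ ((V D) → ℂ)

def amul (D : ℕ) (hb : ℝ) (q : ℂ) (a b : Alg D) : Alg D :=
  a.sum fun k f => b.sum fun l g =>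
    Finsupp.single (k + l) ((q ^ (Nz D k l)) • (f * Sh D hb k g))

def astar (D : ℕ) (hb : ℝ) (q : ℂ) (a : Alg D) : Alg D :=
  a.sum fun k f => Finsupp.single (-k) ((q ^ (Nz D (-k) (-k))) • Sh D hb (-k) (star f))

structure GoodF (D : ℕ) (hb : ℝ) (F : Set (V D → ℂ)) : Prop where
  zero_mem : (0 : V D → ℂ) ∈ F
  add_mem : ∀ f ∈ F, ∀ g ∈ F, f + g ∈ F
  mul_mem : ∀ f ∈ F, ∀ g ∈ F, f * g ∈ F
  smul_mem : ∀ (c : ℂ), ∀ f ∈ F, c • f ∈ F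
  star_mem : ∀ f ∈ F, star f ∈ F
  shift_mem : ∀ (k : L D), ∀ f ∈ F, Sh D hb k f ∈ F

def SeparatesPts (D : ℕ) (F : Set (V D → ℂ)) : Prop :=
  ∀ x y : V D, x ≠ y → ∃ f ∈ F, f x ≠ f y


def Phi (D : ℕ) (Λ₀ Λ₁ : Matrix (Fin D) (Fin D) ℝ) (δ : V D) (x : V D) (k : L D) : V D :=
  Λ₀.mulVec x + Λ₁.mulVec (cz k) + δ

def cact (D : ℕ) (hb : ℝ) (q : ℂ) (Λ₀ Λ₁ E : Matrix (Fin D) (Fin D) ℝ)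
    (R : Matrix (Fin D) (Fin D) ℤ) (δ : V D)
    (a : Alg D) (ξ : V D × L D → ℂ) : V D × L D → ℂ :=
  fun p => a.sum fun n f =>
    (q ^ (((Nr D (Phi D Λ₀ Λ₁ δ p.1 p.2) (cz n) : ℝ) : ℂ))) *
      f (hb • Phi D Λ₀ Λ₁ δ p.1 p.2) *
      ξ (p.1 + E.mulVec (cz n), p.2 + R.mulVec n)

structure FInvariant (D : ℕ) (F : Set (V D → ℂ)) (S : Submodule ℂ (V D × L D → ℂ)) : Prop where
  fmul : ∀ f ∈ F, ∀ ξ ∈ S, (fun p : V D × L D => f p.1 * ξ p) ∈ S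
  transl : ∀ (lam : V D) (r : L D), ∀ ξ ∈ S, (fun p : V D × L D => ξ (p.1 + lam, p.2 + r)) ∈ S
  phase : ∀ (lam : V D), ∀ ξ ∈ S,
    (fun p : V D × L D => Complex.exp (Complex.I * ((∑ i, lam i * p.1 i : ℝ) : ℂ)) * ξ p) ∈ S

/-- The translation map `φ(ξ)(x,k) = ξ(x + E(δ'−δ), k + z)` where `z = R(δ'−δ) ∈ ℤ^D`. -/
def phiTr (D : ℕ) (E : Matrix (Fin D) (Fin D) ℝ) (w : V D) (z : L D)
    (ξ : V D × L D → ℂ) : V D × L D → ℂ :=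
  fun p => ξ (p.1 + E.mulVec w, p.2 + z)

/-- Proposition 3.3: if `Λ₀E + Λ₁R = 1` and `R(δ−δ') ∈ ℤ^D`, then
`φ(ξ)(x,k) = ξ(x+E(δ'−δ), k+R(δ'−δ))` is an isomorphism of left `A^D_{ħ,q}(F)`-modules
`S_ħ^δ(Λ₀,E,Λ₁,R) ≃ S_ħ^{δ'}(Λ₀,E,Λ₁,R)`. -/
theorem stmt6 (D : ℕ) (hb : ℝ) (hhb : 0 < hb) (q : ℂ) (hq : ‖q‖ = 1)
    (F : Set (V D → ℂ)) (hF : GoodF D hb F)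
    (Λ₀ Λ₁ E : Matrix (Fin D) (Fin D) ℝ) (R : Matrix (Fin D) (Fin D) ℤ) (δ δ' : V D)
    (hcomp : Λ₀ * E + Λ₁ * R.map (Int.cast : ℤ → ℝ) = 1)
    (z : L D) (hz : (R.map (Int.cast : ℤ → ℝ)).mulVec (δ' - δ) = cz z)
    (S : Submodule ℂ (V D × L D → ℂ)) (hS : FInvariant D F S) :
    IsLinearMap ℂ (phiTr D E (δ' - δ) z) ∧
    (∀ ξ ∈ S, phiTr D E (δ' - δ) z ξ ∈ S) ∧
    Set.BijOn (phiTr D E (δ' - δ) z) (S : Set (V D × L D → ℂ)) (S : Set (V D × L D → ℂ)) ∧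
    (∀ a : Alg D, (∀ k, a k ∈ F) → ∀ ξ : V D × L D → ℂ,
      phiTr D E (δ' - δ) z (cact D hb q Λ₀ Λ₁ E R δ a ξ) =
        cact D hb q Λ₀ Λ₁ E R δ' a (phiTr D E (δ' - δ) z ξ)) := by
  set w := δ' - δ with hw
  have hlin : IsLinearMap ℂ (phiTr D E w z) := ⟨fun ξ η => rfl, fun c ξ => rfl⟩
  have hmem : ∀ ξ ∈ S, phiTr D E w z ξ ∈ S := fun ξ hξ =>
    hS.transl (E.mulVec w) z ξ hξ
  have hinv1 : ∀ ξ, phiTr D E w z (phiTr D E (-w) (-z) ξ) = ξ := by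
    intro ξ; funext p
    simp [phiTr, Matrix.mulVec_neg]
  have hinv2 : ∀ ξ, phiTr D E (-w) (-z) (phiTr D E w z ξ) = ξ := by
    intro ξ; funext p
    simp [phiTr, Matrix.mulVec_neg]
  refine ⟨hlin, hmem, ⟨fun ξ hξ => hmem ξ hξ, fun ξ _ η _ h => by
      rw [← hinv2 ξ, h, hinv2 η], fun η hη => ⟨phiTr D E (-w) (-z) η,
      hS.transl (E.mulVec (-w)) (-z) η hη, hinv1 η⟩⟩, ?_⟩
  have hPhi : ∀ (x : V D) (k : L D),
      Phi D Λ₀ Λ₁ δ (x + E.mulVec w) (k + z) = Phi D Λ₀ Λ₁ δ' x k := by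
    intro x k
    have hcz : cz (k + z) = cz k + cz z := by
      funext i; simp [cz]
    have h1 : Λ₀.mulVec (E.mulVec w) + Λ₁.mulVec (cz z) = w := by
      rw [← hz, Matrix.mulVec_mulVec, Matrix.mulVec_mulVec, ← Matrix.add_mulVec,
        hcomp, Matrix.one_mulVec]
    have hδ' : δ' = w + δ := by rw [hw]; abel
    funext i
    have h1i := congrFun h1 i
    have h2i := congrFun hδ' i
    simp only [Phi, Matrix.mulVec_add, hcz, Pi.add_apply] at *
    linarith
  intro a ha ξ
  funext p
  show cact D hb q Λ₀ Λ₁ E R δ a ξ (p.1 + E.mulVec w, p.2 + z) = _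
  simp only [cact, hPhi p.1 p.2]
  refine Finsupp.sum_congr fun n _ => ?_
  show _ * _ * ξ (p.1 + E.mulVec w + E.mulVec (cz n), p.2 + z + R.mulVec n) = _
  simp only [phiTr]
  rw [add_right_comm p.1 (E.mulVec w) (E.mulVec (cz n)), add_right_comm p.2 z (R.mulVec n)]
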